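/- Let $C$ be a closed convex cone in a positive-dimensional real normed vector space $V$ such that $C$ spans $V$ and contains no line, and let $x\in C$ be nonzero. Then there exists a unique minimal closed extremal face $F$ of $C$ containing $x$, and moreover $x$ lies in the relative interior of $F$. -/
import Mathlib
open Pointwise

/-- `F` is a closed extremal face of the cone `C`: a closed subcone of `C` such that
`u + v ∈ F` with `u, v ∈ C` forces `u, v ∈ F`. -/
def IsClosedExtremalFace {V : Type*} [AddCommGroup V] [Module ℝ V]
    [TopologicalSpace V] (C F : Set V) : Prop :=
  F ⊆ C ∧ IsClosed F ∧
    (∀ u v : V, u ∈ F → v ∈ F → u + v ∈ F) ∧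
    (∀ (a : ℝ), 0 ≤ a → ∀ u ∈ F, a • u ∈ F) ∧
    (∀ u v : V, u ∈ C → v ∈ C → u + v ∈ F → u ∈ F ∧ v ∈ F)

/-- for a closed convex cone `C` spanning a positive-dimensional real
normed vector space and containing no line, and a nonzero `x ∈ C`, there exists a unique
minimal closed extremal face `F` of `C` containing `x`; moreover `x` lies in the relative
interior of `F` (its interior within the linear span of `F`). -/
theorem stmt_7 {V : Type*} [NormedAddCommGroup V] [NormedSpace ℝ V]
    [FiniteDimensional ℝ V] (hV : 0 < Module.finrank ℝ V)
    (C : ConvexCone ℝ V) (hCcl : IsClosed (C : Set V))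
    (hCspan : Submodule.span ℝ (C : Set V) = ⊤)
    (hCsal : ∀ v ∈ C, -v ∈ C → v = 0)
    (x : V) (hx : x ∈ C) (hx0 : x ≠ 0) :
    ∃ F : Set V, IsClosedExtremalFace (C : Set V) F ∧ x ∈ F ∧
      (∀ F' : Set V, IsClosedExtremalFace (C : Set V) F' → x ∈ F' → F ⊆ F') ∧
      (∃ ε : ℝ, 0 < ε ∧ ∀ z ∈ Submodule.span ℝ F, ‖z - x‖ < ε → z ∈ F) ∧
      (∀ F'' : Set V, IsClosedExtremalFace (C : Set V) F'' → x ∈ F'' →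
        (∀ F' : Set V, IsClosedExtremalFace (C : Set V) F' → x ∈ F' → F'' ⊆ F') →
        F'' = F) := by
  classical
  -- 0 ∈ C
  have h0C : (0 : V) ∈ C := by
    have : Filter.Tendsto (fun n : ℕ => (1 / (n + 1) : ℝ) • x) Filter.atTop (nhds 0) := by
      have h1 : Filter.Tendsto (fun n : ℕ => (1 / (n + 1) : ℝ)) Filter.atTop (nhds 0) :=
        tendsto_one_div_add_atTop_nhds_zero_nat
      simpa using h1.smul_const x
    refine hCcl.mem_of_tendsto this (Filter.Eventually.of_forall fun n => ?_)
    exact C.smul_mem (by positivity) hx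
  -- monotonicity lemma: if x - ε•u ∈ C and 0 < t ≤ ε then x - t•u ∈ C
  have mono : ∀ (u : V) (ε t : ℝ), 0 < ε → x - ε • u ∈ C → 0 < t → t ≤ ε → x - t • u ∈ C := by
    intro u ε t hε hu ht hte
    have key : (t / ε) • (x - ε • u) + (1 - t / ε) • x = x - t • u := by
      rw [smul_sub, smul_smul, div_mul_cancel₀ _ hε.ne']
      module
    rw [← key]
    have hd : 0 ≤ t / ε := le_of_lt (div_pos ht hε)
    have hd1 : t / ε ≤ 1 := (div_le_one hε).2 hte
    exact C.convex hu hx hd (by linarith) (by ring)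
  -- the candidate minimal face
  set F : Set V := {y | y ∈ C ∧ ∃ ε : ℝ, 0 < ε ∧ x - ε • y ∈ C} with hF
  have hFC : F ⊆ (C : Set V) := fun y hy => hy.1
  have hxF : x ∈ F := ⟨hx, 1/2, by norm_num, by
    have : x - (1/2 : ℝ) • x = (1/2 : ℝ) • x := by module
    rw [this]; exact C.smul_mem (by norm_num) hx⟩
  have h0F : (0 : V) ∈ F := ⟨h0C, 1, one_pos, by simpa using hx⟩
  have hFadd : ∀ u v : V, u ∈ F → v ∈ F → u + v ∈ F := by
    rintro u v ⟨huC, ε1, hε1, hu⟩ ⟨hvC, ε2, hε2, hv⟩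
    refine ⟨C.add_mem huC hvC, min ε1 ε2 / 2, by positivity, ?_⟩
    have h1 : x - min ε1 ε2 • u ∈ C := mono u ε1 _ hε1 hu (by positivity) (min_le_left _ _)
    have h2 : x - min ε1 ε2 • v ∈ C := mono v ε2 _ hε2 hv (by positivity) (min_le_right _ _)
    have key : x - (min ε1 ε2 / 2) • (u + v)
        = (1/2 : ℝ) • (x - min ε1 ε2 • u) + (1/2 : ℝ) • (x - min ε1 ε2 • v) := by module
    rw [key]
    exact C.add_mem (C.smul_mem (by norm_num) h1) (C.smul_mem (by norm_num) h2)
  have hFsmul : ∀ (a : ℝ), 0 ≤ a → ∀ u ∈ F, a • u ∈ F := by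
    rintro a ha u ⟨huC, ε, hε, hu⟩
    rcases eq_or_lt_of_le ha with h | h
    · simpa [← h] using h0F
    · exact ⟨C.smul_mem h huC, ε / a, by positivity, by
        rw [smul_smul, div_mul_cancel₀ _ (ne_of_gt h)]; exact hu⟩
  have hFext : ∀ u v : V, u ∈ (C : Set V) → v ∈ (C : Set V) → u + v ∈ F → u ∈ F ∧ v ∈ F := by
    rintro u v huC hvC ⟨-, ε, hε, huv⟩
    constructor
    · refine ⟨huC, ε, hε, ?_⟩
      have : x - ε • u = (x - ε • (u + v)) + ε • v := by module
      rw [this]; exact C.add_mem huv (C.smul_mem hε hvC)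
    · refine ⟨hvC, ε, hε, ?_⟩
      have : x - ε • v = (x - ε • (u + v)) + ε • u := by module
      rw [this]; exact C.add_mem huv (C.smul_mem hε huC)
  -- span of F equals F - F
  set W : Submodule ℝ V := Submodule.span ℝ F with hW
  have hFW : F ⊆ (W : Set V) := Submodule.subset_span
  have hWsub : ∀ w ∈ W, ∃ u ∈ F, ∃ v ∈ F, w = u - v := by
    intro w hw
    induction hw using Submodule.span_induction with
    | mem y hy => exact ⟨y, hy, 0, h0F, by simp⟩
    | zero => exact ⟨0, h0F, 0, h0F, by simp⟩
    | add y z _ _ hy hz =>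
        obtain ⟨u1, hu1, v1, hv1, rfl⟩ := hy
        obtain ⟨u2, hu2, v2, hv2, rfl⟩ := hz
        exact ⟨u1 + u2, hFadd _ _ hu1 hu2, v1 + v2, hFadd _ _ hv1 hv2, by abel⟩
    | smul a y _ hy =>
        obtain ⟨u, hu, v, hv, rfl⟩ := hy
        rcases le_or_gt 0 a with ha | ha
        · exact ⟨a • u, hFsmul a ha u hu, a • v, hFsmul a ha v hv, by module⟩
        · exact ⟨(-a) • v, hFsmul (-a) (by linarith) v hv,
            (-a) • u, hFsmul (-a) (by linarith) u hu, by module⟩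
  -- F = C ∩ W, hence closed
  have hFeq : F = (C : Set V) ∩ (W : Set V) := by
    apply Set.Subset.antisymm
    · exact fun y hy => ⟨hFC hy, hFW hy⟩
    · rintro y ⟨hyC, hyW⟩
      obtain ⟨u, hu, v, hv, hy⟩ := hWsub y hyW
      have hvC : v ∈ C := hFC hv
      have : y + v ∈ F := by rw [hy]; simpa using hu
      exact (hFext y v hyC hvC this).1
  have hFcl : IsClosed F := by
    rw [hFeq]; exact hCcl.inter W.closed_of_finiteDimensional
  have hface : IsClosedExtremalFace (C : Set V) F := ⟨hFC, hFcl, hFadd, hFsmul, hFext⟩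
  -- minimality
  have hmin : ∀ F' : Set V, IsClosedExtremalFace (C : Set V) F' → x ∈ F' → F ⊆ F' := by
    rintro F' ⟨hF'C, -, -, hF'smul, hF'ext⟩ hxF'
    rintro y ⟨hyC, ε, hε, hy⟩
    have h1 : (x - ε • y) + ε • y ∈ F' := by simpa using hxF'
    have h2 : ε • y ∈ F' := (hF'ext _ _ hy (C.smul_mem hε hyC) h1).2
    have := hF'smul ε⁻¹ (by positivity) _ h2
    rwa [smul_smul, inv_mul_cancel₀ hε.ne', one_smul] at this
  -- relative interior
  have hrel : ∃ ε : ℝ, 0 < ε ∧ ∀ z ∈ Submodule.span ℝ F, ‖z - x‖ < ε → z ∈ F := by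
    set F' : Set W := ((↑) : W → V) ⁻¹' F with hF'
    have hF'conv : Convex ℝ F' := by
      intro u hu v hv a b ha hb hab
      show ((a • u + b • v : W) : V) ∈ F
      push_cast
      exact hFadd _ _ (hFsmul a ha _ hu) (hFsmul b hb _ hv)
    have hspan' : affineSpan ℝ F' = ⊤ := by
      have hne : F'.Nonempty := ⟨⟨x, hFW hxF⟩, hxF⟩
      rw [AffineSubspace.affineSpan_eq_top_iff_vectorSpan_eq_top_of_nonempty ℝ W W hne]
      rw [eq_top_iff]
      intro w _
      obtain ⟨u, hu, v, hv, huv⟩ := hWsub (w : V) w.2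
      have hw : w = (⟨u, hFW hu⟩ : W) - ⟨v, hFW hv⟩ := Subtype.ext (by simpa using huv)
      rw [hw]
      exact vsub_mem_vectorSpan ℝ hu hv
    obtain ⟨y₀, hy₀⟩ := (hF'conv.interior_nonempty_iff_affineSpan_eq_top).2 hspan'
    -- x - ε•y₀ ∈ F for some ε
    obtain ⟨hy₀C, ε, hε, hy₀x⟩ := (interior_subset (s := F') hy₀)
    set xW : W := ⟨x, hFW hxF⟩ with hxW
    have hdiff : xW - ε • y₀ ∈ F' := by
      show ((xW - ε • y₀ : W) : V) ∈ F
      push_cast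
      rw [hFeq]
      refine ⟨hy₀x, ?_⟩
      exact Submodule.sub_mem W (hFW hxF) (Submodule.smul_mem W ε (hFW (interior_subset (s := F') hy₀)))
    -- ε • y₀ ∈ interior F'
    have hsm : ε • y₀ ∈ interior F' := by
      have h1 : ε • y₀ ∈ ε • interior F' := Set.smul_mem_smul_set hy₀
      rw [← interior_smul₀ hε.ne' F'] at h1
      refine interior_mono ?_ h1
      rintro z ⟨w, hw, rfl⟩
      exact hFsmul ε hε.le _ hw
    -- translation: xW ∈ interior F'
    have hxint : xW ∈ interior F' := by
      have h1 : xW ∈ (xW - ε • y₀) +ᵥ interior F' :=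
        ⟨ε • y₀, hsm, by show (xW - ε • y₀) + ε • y₀ = xW; module⟩
      rw [← interior_vadd] at h1
      refine interior_mono ?_ h1
      rintro z ⟨w, hw, rfl⟩
      exact hFadd _ _ hdiff hw
    obtain ⟨δ, hδ, hball⟩ := Metric.isOpen_iff.1 isOpen_interior xW hxint
    refine ⟨δ, hδ, fun z hz hzx => ?_⟩
    have hzW : z ∈ W := hz
    have : (⟨z, hzW⟩ : W) ∈ Metric.ball xW δ := by
      rw [Metric.mem_ball, Subtype.dist_eq, dist_eq_norm]
      exact hzx
    exact interior_subset (s := F') (hball this)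
  refine ⟨F, hface, hxF, hmin, hrel, ?_⟩
  intro F'' hF'' hxF'' hmin''
  exact Set.Subset.antisymm (hmin'' F hface hxF) (hmin F'' hF'' hxF'')
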